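/- Let A, B, M₁, M₂ be n × n complex matrices, let c ∈ ℂ and r > 0, and let Γ be the circle of radius r centered at c. Assume that for every z on Γ both matrices B z − A − M₁ and B z − A − M₂ are invertible, and let R₁ = sup_{z ∈ Γ} ‖(Bz − A − M₁)⁻¹‖ and R₂ = sup_{z ∈ Γ} ‖(Bz − A − M₂)⁻¹‖ (both finite). Define the Riesz projections P_i = (1/(2πi)) ∮_Γ (Bz − A − M_i)⁻¹ B dz for i = 1, 2. Then ‖P₁ − P₂‖ ≤ r · R₁ · R₂ · ‖M₁ − M₂‖ · ‖B‖. -/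

import Mathlib

open Matrix MeasureTheory

attribute [local instance] Matrix.normedAddCommGroup Matrix.normedSpace

/-- The spectral (operator) norm of a complex matrix, induced by the Euclidean
vector norm. -/
noncomputable def specNorm {m n : Type*} [Fintype m] [Fintype n] [DecidableEq n]
    (A : Matrix m n ℂ) : ℝ :=
  ‖LinearMap.toContinuousLinearMap (Matrix.toEuclideanLin A)‖

/-- The Riesz projection `(1/(2πi)) ∮_Γ (Bz − A − M)⁻¹ B dz` over the circle `Γ` of
radius `r` centered at `c`, parametrized as `z = c + r e^{iθ}`, `θ ∈ [0, 2π]`. -/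
noncomputable def rieszProj (n : ℕ) (A B M : Matrix (Fin n) (Fin n) ℂ) (c : ℂ) (r : ℝ) :
    Matrix (Fin n) (Fin n) ℂ :=
  (2 * Real.pi * Complex.I)⁻¹ •
    ∫ θ in (0:ℝ)..(2 * Real.pi),
      (Complex.I * (r : ℂ) * Complex.exp (θ * Complex.I)) •
        (((c + (r : ℂ) * Complex.exp (θ * Complex.I)) • B - A - M)⁻¹ * B)

set_option synthInstance.maxHeartbeats 1000000
set_option maxHeartbeats 1000000

section aux
variable {n : ℕ}

lemma specNorm_eq (X : Matrix (Fin n) (Fin n) ℂ) :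
    specNorm X = ‖Matrix.toEuclideanCLM (𝕜 := ℂ) X‖ := by
  have h : LinearMap.toContinuousLinearMap (Matrix.toEuclideanLin X)
      = Matrix.toEuclideanCLM (𝕜 := ℂ) X := by
    apply ContinuousLinearMap.coe_injective
    rw [Matrix.coe_toEuclideanCLM_eq_toEuclideanLin]
    exact LinearMap.coe_toContinuousLinearMap _
  rw [specNorm, h]

lemma specNorm_smul (a : ℂ) (X : Matrix (Fin n) (Fin n) ℂ) :
    specNorm (a • X) = ‖a‖ * specNorm X := by
  rw [specNorm_eq, specNorm_eq, _root_.map_smul]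
  exact norm_smul a (Matrix.toEuclideanCLM (𝕜 := ℂ) X)

lemma specNorm_mul_le (X Y : Matrix (Fin n) (Fin n) ℂ) :
    specNorm (X * Y) ≤ specNorm X * specNorm Y := by
  rw [specNorm_eq, specNorm_eq, specNorm_eq, _root_.map_mul]
  exact norm_mul_le _ _

lemma specNorm_nonneg (X : Matrix (Fin n) (Fin n) ℂ) : 0 ≤ specNorm X :=
  norm_nonneg _

noncomputable def euclCLM (n : ℕ) : Matrix (Fin n) (Fin n) ℂ →L[ℂ]
    (EuclideanSpace ℂ (Fin n) →L[ℂ] EuclideanSpace ℂ (Fin n)) :=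
  LinearMap.toContinuousLinearMap
    { toFun := Matrix.toEuclideanCLM (𝕜 := ℂ),
      map_add' := fun x y => map_add _ x y,
      map_smul' := fun c x => _root_.map_smul _ c x }

lemma euclCLM_apply (X : Matrix (Fin n) (Fin n) ℂ) :
    euclCLM n X = Matrix.toEuclideanCLM (𝕜 := ℂ) X := rfl

lemma specNorm_continuous : Continuous (specNorm : Matrix (Fin n) (Fin n) ℂ → ℝ) := by
  have : (specNorm : Matrix (Fin n) (Fin n) ℂ → ℝ) = fun X => ‖euclCLM n X‖ := by
    funext X; rw [specNorm_eq, euclCLM_apply]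
  rw [this]
  exact (euclCLM n).continuous.norm

noncomputable instance matENormedAddMonoid : ENormedAddMonoid (Matrix (Fin n) (Fin n) ℂ) :=
  (@NormedAddCommGroup.toENormedAddCommMonoid _ Matrix.normedAddCommGroup).toENormedAddMonoid
end aux

/-- **Stability of Riesz projections (first-order bound).**
Let `A, B, M₁, M₂` be `n × n` complex matrices and `Γ` the circle of radius `r > 0`
centered at `c`. Assume `Bz − A − Mᵢ` is invertible for every `z ∈ Γ`, and let
`Rᵢ = sup_{z ∈ Γ} ‖(Bz − A − Mᵢ)⁻¹‖` (spectral norm). Then the Riesz projections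
`Pᵢ = (1/(2πi)) ∮_Γ (Bz − A − Mᵢ)⁻¹ B dz` satisfy
`‖P₁ − P₂‖ ≤ r · R₁ · R₂ · ‖M₁ − M₂‖ · ‖B‖`. -/
theorem riesz_projection_difference_bound (n : ℕ)
    (A B M₁ M₂ : Matrix (Fin n) (Fin n) ℂ) (c : ℂ) (r : ℝ) (hr : 0 < r)
    (h₁ : ∀ z ∈ Metric.sphere c r, IsUnit (z • B - A - M₁))
    (h₂ : ∀ z ∈ Metric.sphere c r, IsUnit (z • B - A - M₂))
    (R₁ R₂ : ℝ)
    (hR₁ : R₁ = sSup ((fun z => specNorm ((z • B - A - M₁)⁻¹)) '' Metric.sphere c r))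
    (hR₂ : R₂ = sSup ((fun z => specNorm ((z • B - A - M₂)⁻¹)) '' Metric.sphere c r)) :
    specNorm (rieszProj n A B M₁ c r - rieszProj n A B M₂ c r) ≤
      r * R₁ * R₂ * specNorm (M₁ - M₂) * specNorm B := by
  have hz : ∀ θ : ℝ, c + (r : ℂ) * Complex.exp (θ * Complex.I) ∈ Metric.sphere c r := by
    intro θ
    simp only [Metric.mem_sphere, Complex.dist_eq, add_sub_cancel_left, _root_.map_mul, norm_mul,
      Complex.norm_real, Real.norm_eq_abs, Complex.norm_exp_ofReal_mul_I, mul_one, abs_of_pos hr]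
  -- continuity of the inverses as functions on the circle (both in θ and in z)
  have hScont : ∀ M : Matrix (Fin n) (Fin n) ℂ, Continuous fun θ : ℝ =>
      (c + (r : ℂ) * Complex.exp (θ * Complex.I)) • B - A - M := by
    intro M
    apply Continuous.sub _ continuous_const
    apply Continuous.sub _ continuous_const
    exact Continuous.smul (by fun_prop : Continuous fun θ : ℝ => c + (r : ℂ) * Complex.exp (θ * Complex.I)) continuous_const
  have hdet : ∀ (M : Matrix (Fin n) (Fin n) ℂ),
      (∀ z ∈ Metric.sphere c r, IsUnit (z • B - A - M)) →
      ∀ z ∈ Metric.sphere c r, ((z : ℂ) • B - A - M).det ≠ 0 := fun M hM z hzs =>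
    ((Matrix.isUnit_iff_isUnit_det _).mp (hM z hzs)).ne_zero
  have hinv : ∀ (M : Matrix (Fin n) (Fin n) ℂ),
      (∀ z ∈ Metric.sphere c r, IsUnit (z • B - A - M)) →
      Continuous fun θ : ℝ =>
        ((c + (r : ℂ) * Complex.exp (θ * Complex.I)) • B - A - M)⁻¹ := by
    intro M hM
    rw [continuous_iff_continuousAt]
    intro θ
    exact (continuousAt_matrix_inv _ (by
      rw [Ring.inverse_eq_inv']
      exact continuousAt_inv₀ (hdet M hM _ (hz θ)))).comp (hScont M).continuousAt
  -- boundedness of the sup sets and the bounds R₁ R₂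
  have hbdd : ∀ (M : Matrix (Fin n) (Fin n) ℂ),
      (∀ z ∈ Metric.sphere c r, IsUnit (z • B - A - M)) →
      BddAbove ((fun z => specNorm ((z • B - A - M)⁻¹)) '' Metric.sphere c r) := by
    intro M hM
    apply (isCompact_sphere c r).bddAbove_image
    apply ContinuousOn.comp specNorm_continuous.continuousOn _ (Set.mapsTo_univ _ _)
    intro z hzs
    apply ContinuousAt.continuousWithinAt
    exact (continuousAt_matrix_inv _ (by
      rw [Ring.inverse_eq_inv']
      exact continuousAt_inv₀ (hdet M hM z hzs))).comp (by continuity : Continuous fun z : ℂ => z • B - A - M).continuousAt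
  have hb₁ : ∀ θ : ℝ,
      specNorm (((c + (r : ℂ) * Complex.exp (θ * Complex.I)) • B - A - M₁)⁻¹) ≤ R₁ := by
    intro θ
    rw [hR₁]
    exact le_csSup (hbdd M₁ h₁) ⟨_, hz θ, rfl⟩
  have hb₂ : ∀ θ : ℝ,
      specNorm (((c + (r : ℂ) * Complex.exp (θ * Complex.I)) • B - A - M₂)⁻¹) ≤ R₂ := by
    intro θ
    rw [hR₂]
    exact le_csSup (hbdd M₂ h₂) ⟨_, hz θ, rfl⟩
  have hR₁0 : 0 ≤ R₁ := le_trans (specNorm_nonneg _) (hb₁ 0)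
  have hR₂0 : 0 ≤ R₂ := le_trans (specNorm_nonneg _) (hb₂ 0)
  -- integrands
  set f₁ : ℝ → Matrix (Fin n) (Fin n) ℂ := fun θ =>
    (Complex.I * (r : ℂ) * Complex.exp (θ * Complex.I)) •
      (((c + (r : ℂ) * Complex.exp (θ * Complex.I)) • B - A - M₁)⁻¹ * B) with hf₁def
  set f₂ : ℝ → Matrix (Fin n) (Fin n) ℂ := fun θ =>
    (Complex.I * (r : ℂ) * Complex.exp (θ * Complex.I)) •
      (((c + (r : ℂ) * Complex.exp (θ * Complex.I)) • B - A - M₂)⁻¹ * B) with hf₂def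
  set g : ℝ → Matrix (Fin n) (Fin n) ℂ := fun θ =>
    (Complex.I * (r : ℂ) * Complex.exp (θ * Complex.I)) •
      (((c + (r : ℂ) * Complex.exp (θ * Complex.I)) • B - A - M₁)⁻¹ *
        ((M₁ - M₂) *
          ((((c + (r : ℂ) * Complex.exp (θ * Complex.I)) • B - A - M₂)⁻¹) * B))) with hgdef
  have hwcont : Continuous fun θ : ℝ =>
      Complex.I * (r : ℂ) * Complex.exp (θ * Complex.I) := by continuity
  have hint₁ : IntervalIntegrable f₁ volume 0 (2 * Real.pi) :=
    (hwcont.smul ((hinv M₁ h₁).matrix_mul continuous_const)).intervalIntegrable _ _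
  have hint₂ : IntervalIntegrable f₂ volume 0 (2 * Real.pi) :=
    (hwcont.smul ((hinv M₂ h₂).matrix_mul continuous_const)).intervalIntegrable _ _
  have hintg : IntervalIntegrable g volume 0 (2 * Real.pi) :=
    (hwcont.smul ((hinv M₁ h₁).matrix_mul
      (continuous_const.matrix_mul ((hinv M₂ h₂).matrix_mul continuous_const)))).intervalIntegrable _ _
  -- the resolvent identity, pointwise
  have key : ∀ θ : ℝ, f₁ θ - f₂ θ = g θ := by
    intro θ
    set S₁ := (c + (r : ℂ) * Complex.exp (θ * Complex.I)) • B - A - M₁ with hS₁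
    set S₂ := (c + (r : ℂ) * Complex.exp (θ * Complex.I)) • B - A - M₂ with hS₂
    have hd₁ : IsUnit S₁.det := (Matrix.isUnit_iff_isUnit_det _).mp (h₁ _ (hz θ))
    have hd₂ : IsUnit S₂.det := (Matrix.isUnit_iff_isUnit_det _).mp (h₂ _ (hz θ))
    have hkey : S₁⁻¹ - S₂⁻¹ = S₁⁻¹ * ((M₁ - M₂) * S₂⁻¹) := by
      have h12 : M₁ - M₂ = S₂ - S₁ := by rw [hS₁, hS₂]; abel
      rw [h12, sub_mul, Matrix.mul_nonsing_inv _ hd₂, mul_sub, mul_one, ← Matrix.mul_assoc,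
        Matrix.nonsing_inv_mul _ hd₁, Matrix.one_mul]
    simp only [hf₁def, hf₂def, hgdef, ← smul_sub, ← sub_mul, hkey]
    rw [← hS₁, ← hS₂, hkey, Matrix.mul_assoc, Matrix.mul_assoc]
  -- difference of the projections
  have hP : rieszProj n A B M₁ c r - rieszProj n A B M₂ c r
      = (2 * Real.pi * Complex.I)⁻¹ • ∫ θ in (0:ℝ)..(2 * Real.pi), g θ := by
    rw [rieszProj, rieszProj, ← smul_sub, ← intervalIntegral.integral_sub hint₁ hint₂]
    congr 1
    exact intervalIntegral.integral_congr fun θ _ => key θ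
  -- pointwise norm bound
  set C : ℝ := r * (R₁ * (specNorm (M₁ - M₂) * (R₂ * specNorm B))) with hC
  have hgbound : ∀ θ : ℝ, specNorm (g θ) ≤ C := by
    intro θ
    rw [hgdef]
    simp only
    rw [specNorm_smul]
    have hw : ‖Complex.I * (r : ℂ) * Complex.exp (θ * Complex.I)‖ = r := by
      simp only [norm_mul, Complex.norm_I, Complex.norm_real, Real.norm_eq_abs,
        Complex.norm_exp_ofReal_mul_I, one_mul, mul_one, abs_of_pos hr]
    rw [hw, hC]
    apply mul_le_mul_of_nonneg_left _ hr.le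
    refine le_trans (specNorm_mul_le _ _) ?_
    refine mul_le_mul (hb₁ θ) ?_ (specNorm_nonneg _) hR₁0
    refine le_trans (specNorm_mul_le _ _) ?_
    refine mul_le_mul le_rfl ?_ (specNorm_nonneg _) (specNorm_nonneg _)
    refine le_trans (specNorm_mul_le _ _) ?_
    exact mul_le_mul (hb₂ θ) le_rfl (specNorm_nonneg _) hR₂0
  have hC0 : 0 ≤ C := by
    have := le_trans (specNorm_nonneg (g 0)) (hgbound 0); linarith [this]
  -- push through euclCLM and estimate
  have hpush : Matrix.toEuclideanCLM (𝕜 := ℂ) (∫ θ in (0:ℝ)..(2 * Real.pi), g θ)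
      = ∫ θ in (0:ℝ)..(2 * Real.pi), euclCLM n (g θ) := by
    rw [← euclCLM_apply]
    exact ((euclCLM n).intervalIntegral_comp_comm hintg).symm
  have hnormint : ‖∫ θ in (0:ℝ)..(2 * Real.pi), euclCLM n (g θ)‖ ≤ C * (2 * Real.pi) := by
    have := intervalIntegral.norm_integral_le_of_norm_le_const
      (C := C) (f := fun θ => euclCLM n (g θ)) (a := 0) (b := 2 * Real.pi) ?_
    · calc _ ≤ C * |2 * Real.pi - 0| := this
        _ = C * (2 * Real.pi) := by
            rw [sub_zero, abs_of_pos (by positivity)]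
    · intro x _
      show ‖euclCLM n (g x)‖ ≤ C
      rw [euclCLM_apply, ← specNorm_eq]
      exact hgbound x
  have hfinal : specNorm (rieszProj n A B M₁ c r - rieszProj n A B M₂ c r)
      ≤ (2 * Real.pi)⁻¹ * (C * (2 * Real.pi)) := by
    rw [hP, specNorm_smul]
    have hcoef : ‖((2 : ℂ) * (Real.pi : ℂ) * Complex.I)⁻¹‖ = (2 * Real.pi)⁻¹ := by
      rw [norm_inv]
      congr 1
      simp only [norm_mul, Complex.norm_I, Complex.norm_two,
        Complex.norm_real, Real.norm_eq_abs, mul_one, abs_of_pos Real.pi_pos]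
    rw [hcoef, specNorm_eq, hpush]
    exact mul_le_mul_of_nonneg_left hnormint (by positivity)
  calc specNorm (rieszProj n A B M₁ c r - rieszProj n A B M₂ c r)
      ≤ (2 * Real.pi)⁻¹ * (C * (2 * Real.pi)) := hfinal
    _ = r * R₁ * R₂ * specNorm (M₁ - M₂) * specNorm B := by
        rw [hC]; field_simp
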